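/- Let n ≥ 1 and let (p_β)_{β∈ℤ²} ⊂ M_n(ℂ) (independent of γ) satisfy: for every N ∈ ℕ there is C_N > 0 with ‖p_β‖ ≤ C_N(1+|β₁|+|β₂|)^{−N}, and p_{−β} = p_β* for all β. If p_β = 0 whenever β₁ and β₂ are both odd, then for every γ ∈ ℝ∖{0} with γ+2π ≠ 0, σ(P_{γ+2π}) = σ(P_γ). -/

import Mathlib

/- STATEMENT 2: if the coefficients `p_β` vanish whenever `β₁` and `β₂` are both odd, then
`σ(P_{γ+2π}) = σ(P_γ)`. -/

open Complex Matrix MeasureTheory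

attribute [local instance] Matrix.normedAddCommGroup

noncomputable section

/-- `L²(ℝ;ℂⁿ)`. -/
abbrev L2Rn (n : ℕ) : Type :=
  MeasureTheory.Lp (EuclideanSpace ℂ (Fin n)) 2 (volume : Measure ℝ)

/-- `P_γ` is the operator `(P_γ u)(x) = Σ_β p_β e^{iγβ₁β₂/2} e^{iβ₁x} u(x+β₂γ)` on `L²(ℝ;ℂⁿ)`. -/
def IsPgamma (n : ℕ) (p : ℤ × ℤ → Matrix (Fin n) (Fin n) ℂ) (γ : ℝ)
    (P : L2Rn n →L[ℂ] L2Rn n) : Prop :=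
  ∀ u : L2Rn n, ∀ᵐ x ∂(volume : Measure ℝ), ∀ j : Fin n,
    (P u) x j = ∑' β : ℤ × ℤ,
      Complex.exp (Complex.I * (γ : ℂ) * ((β.1 * β.2 : ℤ) : ℂ) / 2) *
        Complex.exp (Complex.I * (β.1 : ℂ) * (x : ℂ)) *
        ∑ k : Fin n, p β j k * u (x + (β.2 : ℝ) * γ) k


open Set
open scoped ENNReal NNReal

section Aux

/-- index of the window (w.r.t. step `c`, offset `s`) containing `x`. -/
def widx (c s x : ℝ) : ℤ := if 0 < c then ⌊(x - s) / c⌋ else -⌊(x - s) / (-c)⌋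

lemma widx_eq {c s l : ℝ} (hl : 0 < l) (hlc : l ≤ |c|) {x : ℝ} {k : ℤ}
    (h1 : s + k * c ≤ x) (h2 : x < s + k * c + l) : widx c s x = k := by
  have hc : c ≠ 0 := by
    intro h; rw [h] at hlc; simp at hlc; linarith
  unfold widx
  rcases lt_or_gt_of_ne hc with hneg | hpos
  · rw [if_neg (not_lt.2 hneg.le)]
    have hC : 0 < -c := by linarith
    have habs : |c| = -c := abs_of_neg hneg
    have : ⌊(x - s) / (-c)⌋ = -k := by
      rw [Int.floor_eq_iff]
      constructor
      · rw [le_div_iff₀ hC]; push_cast; nlinarith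
      · rw [div_lt_iff₀ hC]; push_cast; nlinarith [habs ▸ hlc]
    rw [this]; ring
  · rw [if_pos hpos]
    have habs : |c| = c := abs_of_pos hpos
    rw [Int.floor_eq_iff]
    constructor
    · rw [le_div_iff₀ hpos]; push_cast; nlinarith
    · rw [div_lt_iff₀ hpos]; push_cast; nlinarith [habs ▸ hlc]

lemma widx_self {c : ℝ} (hc : c ≠ 0) (x : ℝ) :
    0 ≤ x - widx c 0 x * c ∧ x - widx c 0 x * c < |c| := by
  unfold widx
  rcases lt_or_gt_of_ne hc with hneg | hpos
  · rw [if_neg (not_lt.2 hneg.le)]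
    have hC : 0 < -c := by linarith
    have h1 := Int.floor_le ((x - 0) / (-c))
    have h2 := Int.lt_floor_add_one ((x - 0) / (-c))
    rw [le_div_iff₀ hC] at h1
    rw [div_lt_iff₀ hC] at h2
    rw [abs_of_neg hneg]
    constructor <;> push_cast at * <;> nlinarith
  · rw [if_pos hpos]
    have h1 := Int.floor_le ((x - 0) / c)
    have h2 := Int.lt_floor_add_one ((x - 0) / c)
    rw [le_div_iff₀ hpos] at h1
    rw [div_lt_iff₀ hpos] at h2
    rw [abs_of_pos hpos]
    constructor <;> push_cast at * <;> nlinarith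

lemma measurable_widx (c s : ℝ) : Measurable (widx c s) := by
  unfold widx
  split
  · exact (measurable_id.sub_const s).div_const c |>.floor
  · exact ((measurable_id.sub_const s).div_const (-c) |>.floor).neg

/-- the union of windows `[s + kc, s + kc + l)`. -/
def Wnd (s l c : ℝ) : Set ℝ := ⋃ k : ℤ, Set.Ico (s + k * c) (s + k * c + l)

lemma measurableSet_Wnd (s l c : ℝ) : MeasurableSet (Wnd s l c) :=
  MeasurableSet.iUnion fun _ => measurableSet_Ico

lemma Wnd_disjoint {s l c : ℝ} (hlc : l ≤ |c|) :
    Pairwise (Function.onFun Disjoint fun k : ℤ => Set.Ico (s + k * c) (s + k * c + l)) := by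
  intro k k' hkk'
  simp only [Function.onFun, Set.Ico_disjoint_Ico]
  have h1 : (1 : ℝ) ≤ |(k' : ℝ) - k| := by
    have : k' - k ≠ 0 := sub_ne_zero.2 (by exact_mod_cast hkk'.symm)
    calc (1:ℝ) = ((1:ℤ):ℝ) := by norm_num
    _ ≤ |((k' - k : ℤ) : ℝ)| := by
        exact_mod_cast Int.one_le_abs (by exact_mod_cast this)
    _ = |(k':ℝ) - k| := by push_cast; ring_nf
  have key : l ≤ |(k':ℝ) - k| * |c| := by
    calc l ≤ |c| := hlc
    _ = 1 * |c| := (one_mul _).symm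
    _ ≤ |(k':ℝ) - k| * |c| := by
        apply mul_le_mul_of_nonneg_right h1 (abs_nonneg c)
  rw [← abs_mul] at key
  rcases abs_cases (((k':ℝ) - k) * c) with ⟨he, _⟩ | ⟨he, _⟩
  · -- (k' - k) * c ≥ 0, so k*c + l ≤ k'*c
    apply min_le_of_left_le
    apply le_max_of_le_right
    nlinarith [key.trans_eq he]
  · apply min_le_of_right_le
    apply le_max_of_le_left
    nlinarith [key.trans_eq he]

lemma mem_Wnd_iff {s l c : ℝ} {x : ℝ} :
    x ∈ Wnd s l c ↔ ∃ k : ℤ, s + k * c ≤ x ∧ x < s + k * c + l := by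
  simp [Wnd, Set.mem_iUnion, Set.mem_Ico]

lemma Wnd_add_int {s l c : ℝ} {x : ℝ} (k : ℤ) :
    x + k * c ∈ Wnd s l c ↔ x ∈ Wnd s l c := by
  simp only [mem_Wnd_iff]
  constructor
  · rintro ⟨k', h1, h2⟩
    exact ⟨k' - k, by push_cast; constructor <;> linarith⟩
  · rintro ⟨k', h1, h2⟩
    exact ⟨k' + k, by push_cast; constructor <;> linarith⟩

lemma qmp_gmap (c s e : ℝ) :
    Measure.QuasiMeasurePreserving (fun x => x + e * widx c s x)
      (volume : Measure ℝ) volume := by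
  have hgm : Measurable (fun x => x + e * widx c s x) :=
    measurable_id.add (measurable_const.mul
      (measurable_from_top.comp (measurable_widx c s)))
  refine ⟨hgm, ?_⟩
  refine Measure.AbsolutelyContinuous.mk fun N hN h0 => ?_
  rw [Measure.map_apply hgm hN]
  have hsub : (fun x => x + e * widx c s x) ⁻¹' N ⊆
      ⋃ k : ℤ, {x : ℝ | widx c s x = k} ∩ ((fun x => x + e * k) ⁻¹' N) := by
    intro x hx
    exact Set.mem_iUnion.2 ⟨widx c s x, rfl, hx⟩
  refine le_antisymm (le_trans (measure_mono hsub) ?_) zero_le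
  refine le_trans (measure_iUnion_le _) ?_
  have : ∀ k : ℤ, volume ({x : ℝ | widx c s x = k} ∩ ((fun x => x + e * k) ⁻¹' N)) = 0 := by
    intro k
    refine measure_mono_null Set.inter_subset_right ?_
    exact (measurePreserving_add_right volume (e * k)).quasiMeasurePreserving.preimage_null h0
  simp [this]

variable {E : Type*} [NormedAddCommGroup E] [NormedSpace ℂ E]

/-- the transplantation operator at the level of functions. -/
def SOpFun (s l c d : ℝ) (u₀ : ℝ → E) : ℝ → E :=
  (Wnd s l c).indicator (fun x => u₀ (x + (d - c) * widx c s x))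

lemma measurable_gmap (c s e : ℝ) : Measurable (fun x : ℝ => x + e * widx c s x) :=
  measurable_id.add (measurable_const.mul
    (measurable_from_top.comp (measurable_widx c s)))

lemma stronglyMeasurable_SOpFun (s l c d : ℝ) {u₀ : ℝ → E}
    (hu : StronglyMeasurable u₀) : StronglyMeasurable (SOpFun s l c d u₀) :=
  (hu.comp_measurable (measurable_gmap c s (d - c))).indicator (measurableSet_Wnd s l c)

lemma SOpFun_congr (s l c d : ℝ) {u₀ v₀ : ℝ → E} (h : u₀ =ᵐ[(volume : Measure ℝ)] v₀) :
    SOpFun s l c d u₀ =ᵐ[(volume : Measure ℝ)] SOpFun s l c d v₀ := by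
  have h2 := (qmp_gmap c s (d - c)).ae_eq h
  filter_upwards [h2] with x hx
  unfold SOpFun
  by_cases hxW : x ∈ Wnd s l c
  · rw [Set.indicator_of_mem hxW, Set.indicator_of_mem hxW]
    exact hx
  · rw [Set.indicator_of_notMem hxW, Set.indicator_of_notMem hxW]

lemma SOpFun_add (s l c d : ℝ) (u₀ v₀ : ℝ → E) :
    SOpFun s l c d (u₀ + v₀) = SOpFun s l c d u₀ + SOpFun s l c d v₀ := by
  funext x
  unfold SOpFun
  by_cases hxW : x ∈ Wnd s l c <;>
    simp [Set.indicator_of_mem, Set.indicator_of_notMem, hxW]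

lemma SOpFun_smul {𝕜 : Type*} [NormedField 𝕜] [NormedSpace 𝕜 E] (s l c d : ℝ) (a : 𝕜)
    (u₀ : ℝ → E) : SOpFun s l c d (a • u₀) = a • SOpFun s l c d u₀ := by
  funext x
  unfold SOpFun
  by_cases hxW : x ∈ Wnd s l c <;>
    simp [Set.indicator_of_mem, Set.indicator_of_notMem, hxW]

lemma lintegral_SOpFun_le {s l c d : ℝ} (hl : 0 < l) (hlc : l ≤ |c|) (hld : l ≤ |d|)
    {u₀ : ℝ → E} (hu : StronglyMeasurable u₀) :
    ∫⁻ x, (‖SOpFun s l c d u₀ x‖₊ : ℝ≥0∞) ^ (2 : ℝ) ∂(volume : Measure ℝ) ≤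
      ∫⁻ x, (‖u₀ x‖₊ : ℝ≥0∞) ^ (2 : ℝ) ∂(volume : Measure ℝ) := by
  set F : ℝ → ℝ≥0∞ := fun z => (‖u₀ z‖₊ : ℝ≥0∞) ^ (2 : ℝ) with hF
  have hFm : Measurable F := by
    exact hu.nnnorm.measurable.coe_nnreal_ennreal.pow_const _
  have step1 : ∫⁻ x, (‖SOpFun s l c d u₀ x‖₊ : ℝ≥0∞) ^ (2 : ℝ) ∂volume =
      ∫⁻ x in Wnd s l c, F (x + (d - c) * widx c s x) ∂volume := by
    rw [← lintegral_indicator (measurableSet_Wnd s l c)]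
    apply lintegral_congr
    intro x
    unfold SOpFun
    by_cases hxW : x ∈ Wnd s l c
    · rw [Set.indicator_of_mem hxW, Set.indicator_of_mem hxW]
    · rw [Set.indicator_of_notMem hxW, Set.indicator_of_notMem hxW]
      simp [ENNReal.zero_rpow_of_pos]
  rw [step1]
  have step2 : ∫⁻ x in Wnd s l c, F (x + (d - c) * widx c s x) ∂volume =
      ∑' k : ℤ, ∫⁻ x in Set.Ico (s + k * c) (s + k * c + l),
        F (x + (d - c) * widx c s x) ∂volume := by
    rw [Wnd, lintegral_iUnion (fun _ => measurableSet_Ico) (Wnd_disjoint hlc)]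
  rw [step2]
  have step3 : ∀ k : ℤ, ∫⁻ x in Set.Ico (s + k * c) (s + k * c + l),
      F (x + (d - c) * widx c s x) ∂volume =
      ∫⁻ x in Set.Ico (s + k * d) (s + k * d + l), F x ∂volume := by
    intro k
    have hcongr : ∫⁻ x in Set.Ico (s + k * c) (s + k * c + l),
        F (x + (d - c) * widx c s x) ∂volume =
        ∫⁻ x in Set.Ico (s + k * c) (s + k * c + l), F (x + (d - c) * k) ∂volume := by
      apply setLIntegral_congr_fun measurableSet_Ico
      intro x hx
      dsimp only
      rw [widx_eq hl hlc hx.1 hx.2]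
    rw [hcongr]
    have hpre : (fun x : ℝ => x + (d - c) * k) ⁻¹' Set.Ico (s + k * d) (s + k * d + l) =
        Set.Ico (s + k * c) (s + k * c + l) := by
      ext x
      simp only [Set.mem_preimage, Set.mem_Ico]
      constructor <;> intro h <;> constructor <;> linarith [h.1, h.2]
    rw [← hpre]
    exact (measurePreserving_add_right volume ((d - c) * k)).setLIntegral_comp_preimage
      measurableSet_Ico hFm
  rw [tsum_congr step3]
  have step4 : ∑' k : ℤ, ∫⁻ x in Set.Ico (s + k * d) (s + k * d + l), F x ∂volume =
      ∫⁻ x in Wnd s l d, F x ∂volume := by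
    rw [Wnd, lintegral_iUnion (fun _ => measurableSet_Ico) (Wnd_disjoint hld)]
  rw [step4]
  exact setLIntegral_le_lintegral _ _

lemma memℒp_SOpFun {s l c d : ℝ} (hl : 0 < l) (hlc : l ≤ |c|) (hld : l ≤ |d|)
    {u₀ : ℝ → E} (hu : StronglyMeasurable u₀) (hu2 : MemLp u₀ 2 (volume : Measure ℝ)) :
    MemLp (SOpFun s l c d u₀) 2 (volume : Measure ℝ) ∧
      eLpNorm (SOpFun s l c d u₀) 2 (volume : Measure ℝ) ≤
        eLpNorm u₀ 2 (volume : Measure ℝ) := by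
  have hnorm : eLpNorm (SOpFun s l c d u₀) 2 (volume : Measure ℝ) ≤
      eLpNorm u₀ 2 (volume : Measure ℝ) := by
    rw [eLpNorm_eq_lintegral_rpow_enorm_toReal (by norm_num) (by norm_num),
      eLpNorm_eq_lintegral_rpow_enorm_toReal (by norm_num) (by norm_num)]
    simp only [ENNReal.toReal_ofNat]
    apply ENNReal.rpow_le_rpow _ (by norm_num)
    exact lintegral_SOpFun_le hl hlc hld hu
  exact ⟨⟨(stronglyMeasurable_SOpFun s l c d hu).aestronglyMeasurable,
    lt_of_le_of_lt hnorm hu2.2⟩, hnorm⟩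

/-- the transplantation operator on `L²`. -/
def SOp (s l c d : ℝ) (hl : 0 < l) (hlc : l ≤ |c|) (hld : l ≤ |d|) :
    Lp E 2 (volume : Measure ℝ) →L[ℂ] Lp E 2 (volume : Measure ℝ) := by
  refine LinearMap.mkContinuous
    { toFun := fun u => ((memℒp_SOpFun hl hlc hld (Lp.stronglyMeasurable u)
        (Lp.memLp u)).1.toLp (SOpFun s l c d (u : ℝ → E)))
      map_add' := ?_
      map_smul' := ?_ } 1 ?_
  · intro u v
    rw [← MemLp.toLp_add]
    apply MemLp.toLp_congr
    refine (SOpFun_congr s l c d (Lp.coeFn_add u v)).trans ?_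
    rw [SOpFun_add]
  · intro a u
    simp only [RingHom.id_apply]
    rw [← MemLp.toLp_const_smul]
    apply MemLp.toLp_congr
    refine (SOpFun_congr s l c d (Lp.coeFn_smul a u)).trans ?_
    rw [SOpFun_smul]
  · intro u
    show ‖((memℒp_SOpFun hl hlc hld (Lp.stronglyMeasurable u) (Lp.memLp u)).1.toLp (SOpFun s l c d (u : ℝ → E)))‖ ≤ 1 * ‖u‖
    rw [one_mul, Lp.norm_toLp, Lp.norm_def]
    apply ENNReal.toReal_mono (Lp.eLpNorm_ne_top u)
    exact (memℒp_SOpFun hl hlc hld (Lp.stronglyMeasurable u) (Lp.memLp u)).2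

lemma SOp_coeFn (s l c d : ℝ) (hl : 0 < l) (hlc : l ≤ |c|) (hld : l ≤ |d|)
    (u : Lp E 2 (volume : Measure ℝ)) :
    (SOp s l c d hl hlc hld u : ℝ → E) =ᵐ[(volume : Measure ℝ)]
      SOpFun s l c d (u : ℝ → E) :=
  MemLp.coeFn_toLp (memℒp_SOpFun hl hlc hld (Lp.stronglyMeasurable u) (Lp.memLp u)).1
lemma phase_eq {c d : ℝ} {mz : ℤ} (hcd : d - c = 2 * Real.pi * mz) {b1 b2 : ℤ}
    (h : ¬(Odd b1 ∧ Odd b2)) :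
    Complex.exp (Complex.I * (d : ℂ) * ((b1 * b2 : ℤ) : ℂ) / 2) =
      Complex.exp (Complex.I * (c : ℂ) * ((b1 * b2 : ℤ) : ℂ) / 2) := by
  have heven : Even (b1 * b2) := by
    rcases Int.even_or_odd b1 with h1 | h1
    · exact h1.mul_right b2
    · rcases Int.even_or_odd b2 with h2 | h2
      · exact h2.mul_left b1
      · exact absurd ⟨h1, h2⟩ h
  obtain ⟨w, hw⟩ := heven
  have hd : (d : ℂ) = (c : ℂ) + 2 * (Real.pi : ℂ) * (mz : ℂ) := by
    have h' : d = c + 2 * Real.pi * mz := by linarith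
    rw [h']; push_cast; ring
  have hz : ((b1 * b2 : ℤ) : ℂ) = (w : ℂ) + (w : ℂ) := by exact_mod_cast congrArg Int.cast hw
  rw [hd, hz]
  rw [show Complex.I * ((c:ℂ) + 2*(Real.pi:ℂ)*(mz:ℂ)) * ((w:ℂ)+(w:ℂ)) / 2 =
    Complex.I * (c:ℂ) * ((w:ℂ)+(w:ℂ)) / 2 + ((mz * w : ℤ):ℂ) * (2 * (Real.pi:ℂ) * Complex.I) by
      push_cast; ring]
  rw [Complex.exp_add, Complex.exp_int_mul_two_pi_mul_I, mul_one]

lemma exp_shift {b1 : ℤ} {t : ℝ} {mm : ℤ} (ht : t = 2 * Real.pi * mm) (x : ℝ) :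
    Complex.exp (Complex.I * (b1 : ℂ) * ((x + t : ℝ) : ℂ)) =
      Complex.exp (Complex.I * (b1 : ℂ) * (x : ℂ)) := by
  rw [show ((x + t : ℝ) : ℂ) = (x:ℂ) + (t:ℂ) by push_cast; ring, ht]
  rw [show Complex.I * (b1:ℂ) * ((x:ℂ) + ((2*Real.pi*(mm:ℝ) : ℝ):ℂ)) =
    Complex.I * (b1:ℂ) * (x:ℂ) + ((b1*mm : ℤ):ℂ) * (2*(Real.pi:ℂ)*Complex.I) by
      push_cast; ring]
  rw [Complex.exp_add, Complex.exp_int_mul_two_pi_mul_I, mul_one]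

lemma intertwine (n : ℕ) (p : ℤ × ℤ → Matrix (Fin n) (Fin n) ℂ)
    (hodd : ∀ β : ℤ × ℤ, Odd β.1 → Odd β.2 → p β = 0)
    (c d : ℝ) (s l : ℝ) (hl : 0 < l) (hlc : l ≤ |c|) (hld : l ≤ |d|)
    (mz : ℤ) (hcd : d - c = 2 * Real.pi * mz)
    (Pc Pd : L2Rn n →L[ℂ] L2Rn n)
    (hPc : IsPgamma n p c Pc) (hPd : IsPgamma n p d Pd) :
    Pc.comp (SOp s l c d hl hlc hld) = (SOp s l c d hl hlc hld).comp Pd := by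
  set S : L2Rn n →L[ℂ] L2Rn n := SOp s l c d hl hlc hld with hS
  refine ContinuousLinearMap.ext fun u => ?_
  rw [ContinuousLinearMap.comp_apply, ContinuousLinearMap.comp_apply]
  refine Lp.ext ?_
  have h1 := hPc (S u)
  have h2' : ∀ᵐ x : ℝ ∂(volume : Measure ℝ), ∀ β : ℤ × ℤ,
      (S u : ℝ → EuclideanSpace ℂ (Fin n)) (x + (β.2 : ℝ) * c) =
        SOpFun s l c d (u : ℝ → EuclideanSpace ℂ (Fin n)) (x + (β.2 : ℝ) * c) := by
    rw [ae_all_iff]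
    intro β
    have := (measurePreserving_add_right (volume : Measure ℝ)
      ((β.2:ℝ) * c)).quasiMeasurePreserving.ae_eq (SOp_coeFn s l c d hl hlc hld u)
    simp only [Function.comp_def] at this
    exact this
  have h3 := (qmp_gmap c s (d - c)).ae (hPd u)
  have h4 := SOp_coeFn s l c d hl hlc hld (Pd u)
  filter_upwards [h1, h2', h3, h4] with x hx1 hx2 hx3 hx4
  refine PiLp.ext fun j => ?_
  rw [hx1 j, hx4]
  by_cases hxW : x ∈ Wnd s l c
  · -- main case
    set k₀ : ℤ := widx c s x with hk₀
    obtain ⟨k, hk1, hk2⟩ := mem_Wnd_iff.1 hxW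
    have hkk : k₀ = k := widx_eq hl hlc hk1 hk2
    rw [SOpFun, Set.indicator_of_mem hxW]
    rw [hx3 j]
    refine tsum_congr fun β => ?_
    by_cases hp : p β = 0
    · simp [hp]
    · have hnodd : ¬(Odd β.1 ∧ Odd β.2) := fun ⟨ho1, ho2⟩ => hp (hodd β ho1 ho2)
      have hphase := phase_eq hcd hnodd
      have hexp : Complex.exp (Complex.I * (β.1 : ℂ) * ((x + (d - c) * (k₀:ℝ) : ℝ) : ℂ)) =
          Complex.exp (Complex.I * (β.1 : ℂ) * (x : ℂ)) := by
        apply exp_shift (mm := mz * k₀)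
        rw [hcd]; push_cast; ring
      have harg : ∀ z : ℝ, z = x + (β.2:ℝ)*c →
          SOpFun s l c d (u : ℝ → EuclideanSpace ℂ (Fin n)) z =
          (u : ℝ → EuclideanSpace ℂ (Fin n))
            (x + (d - c) * (k₀:ℝ) + (β.2:ℝ) * d) := by
        intro z hz
        have hzW : z ∈ Wnd s l c := by rw [hz]; exact (Wnd_add_int β.2).2 hxW
        have hwz : widx c s z = k₀ + β.2 := by
          apply widx_eq hl hlc
          · rw [hz, hkk]; push_cast; linarith
          · rw [hz, hkk]; push_cast; linarith
        rw [SOpFun, Set.indicator_of_mem hzW, hwz, hz]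
        congr 1
        push_cast
        ring
      rw [hx2 β, harg _ rfl, hphase, hexp]
  · -- off the window union : both sides vanish
    rw [SOpFun, Set.indicator_of_notMem hxW]
    have : ∀ β : ℤ × ℤ,
        Complex.exp (Complex.I * (c : ℂ) * ((β.1 * β.2 : ℤ) : ℂ) / 2) *
          Complex.exp (Complex.I * (β.1 : ℂ) * (x : ℂ)) *
          ∑ k : Fin n, p β j k *
            (S u : ℝ → EuclideanSpace ℂ (Fin n)) (x + (β.2 : ℝ) * c) k = 0 := by
      intro β
      have hzW : x + (β.2:ℝ) * c ∉ Wnd s l c := fun hmem => hxW ((Wnd_add_int β.2).1 hmem)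
      rw [hx2 β, SOpFun, Set.indicator_of_notMem hzW]
      simp
    rw [tsum_congr this, tsum_zero]
    simp
lemma SOp_comp (s l c d : ℝ) (hl : 0 < l) (hlc : l ≤ |c|) (hld : l ≤ |d|) :
    ((SOp s l c d hl hlc hld : Lp E 2 (volume : Measure ℝ) →L[ℂ] Lp E 2 volume)).comp (SOp s l d c hl hld hlc) =
      SOp s l c c hl hlc hlc := by
  refine ContinuousLinearMap.ext fun u => ?_
  rw [ContinuousLinearMap.comp_apply]
  refine Lp.ext ?_
  have h1 := SOp_coeFn s l c d hl hlc hld (SOp s l d c hl hld hlc u)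
  have h2' := (qmp_gmap c s (d - c)).ae_eq (SOp_coeFn s l d c hl hld hlc u)
  have h3 := SOp_coeFn s l c c hl hlc hlc u
  filter_upwards [h1, h2', h3] with x hx1 hx2 hx3
  rw [hx1, hx3]
  simp only [Function.comp_def] at hx2
  by_cases hxW : x ∈ Wnd s l c
  · obtain ⟨k, hk1, hk2⟩ := mem_Wnd_iff.1 hxW
    have hkk : widx c s x = k := widx_eq hl hlc hk1 hk2
    rw [SOpFun, SOpFun, Set.indicator_of_mem hxW, Set.indicator_of_mem hxW, hx2, hkk]
    have hyW : x + (d - c) * (k : ℝ) ∈ Wnd s l d := by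
      rw [mem_Wnd_iff]
      exact ⟨k, by linarith, by linarith⟩
    have hwy : widx d s (x + (d - c) * (k : ℝ)) = k := by
      apply widx_eq hl hld
      · linarith
      · linarith
    rw [SOpFun, Set.indicator_of_mem hyW, hwy]
    congr 1
    ring
  · rw [SOpFun, SOpFun, Set.indicator_of_notMem hxW, Set.indicator_of_notMem hxW]
lemma coeFn_sum_Lp {ι : Type*} (s : Finset ι) (f : ι → Lp E 2 (volume : Measure ℝ)) :
    ((∑ j ∈ s, f j : Lp E 2 (volume : Measure ℝ)) : ℝ → E) =ᵐ[(volume : Measure ℝ)]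
      fun x => ∑ j ∈ s, (f j : ℝ → E) x := by
  classical
  induction s using Finset.induction with
  | empty =>
      simp only [Finset.sum_empty]
      exact Lp.coeFn_zero E 2 volume
  | insert _ _ hj ih =>
      rename_i a s'
      rw [Finset.sum_insert hj]
      refine (Lp.coeFn_add _ _).trans ?_
      filter_upwards [ih] with x hx
      simp only [Pi.add_apply, hx, Finset.sum_insert hj]

set_option maxHeartbeats 1000000 in
lemma sum_SOp_one (b : ℝ) (hb : b ≠ 0) (m : ℕ) (hm : 0 < m) (δ : ℝ) (hδ : 0 < δ)
    (hδb : δ ≤ |b|) (hmδ : m * δ = |b|) :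
    ∑ j ∈ Finset.range m, (SOp (j * δ) δ b b hδ hδb hδb : Lp E 2 (volume : Measure ℝ) →L[ℂ] Lp E 2 volume) = 1 := by
  refine ContinuousLinearMap.ext fun u => ?_
  rw [ContinuousLinearMap.sum_apply, ContinuousLinearMap.one_apply]
  refine Lp.ext ?_
  have h1 := coeFn_sum_Lp (Finset.range m)
    (fun j => (SOp (j * δ) δ b b hδ hδb hδb : Lp E 2 (volume : Measure ℝ) →L[ℂ] Lp E 2 volume) u)
  have h2 : ∀ᵐ x : ℝ ∂(volume : Measure ℝ), ∀ j : ℕ, j ∈ Finset.range m →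
      ((SOp (j * δ) δ b b hδ hδb hδb : Lp E 2 (volume : Measure ℝ) →L[ℂ] Lp E 2 volume) u : ℝ → E) x =
        SOpFun (j * δ) δ b b (u : ℝ → E) x :=
    ae_all_iff.2 fun j => ((SOp_coeFn (j * δ) δ b b hδ hδb hδb u).mono fun x hx _ => hx)
  filter_upwards [h1, h2] with x hx1 hx2
  rw [hx1]
  rw [Finset.sum_congr rfl hx2]
  -- now a pointwise statement about SOpFun
  set k₀ : ℤ := widx b 0 x with hk₀
  obtain ⟨hθ1, hθ2⟩ := widx_self hb x
  set θ : ℝ := x - k₀ * b with hθ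
  have hθδ : 0 ≤ θ / δ ∧ θ / δ < m := by
    constructor
    · positivity
    · rw [div_lt_iff₀ hδ]; nlinarith
  set j₀ : ℕ := (⌊θ / δ⌋).toNat with hj₀
  have hj₀' : (j₀ : ℤ) = ⌊θ / δ⌋ := Int.toNat_of_nonneg (Int.floor_nonneg.2 hθδ.1)
  have hj₀m : j₀ < m := by
    have h : ⌊θ / δ⌋ < (m : ℤ) := Int.floor_lt.2 (by exact_mod_cast hθδ.2)
    omega
  have hf1 : (j₀ : ℝ) * δ ≤ θ := by
    have h := Int.floor_le (θ / δ)
    have h' : ((j₀ : ℤ) : ℝ) ≤ θ / δ := by rw [hj₀']; exact h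
    rw [← le_div_iff₀ hδ]
    exact_mod_cast h'
  have hf2 : θ < ((j₀ : ℝ) + 1) * δ := by
    have h := Int.lt_floor_add_one (θ / δ)
    have h' : θ / δ < ((j₀ : ℤ) : ℝ) + 1 := by rw [hj₀']; exact h
    rw [← div_lt_iff₀ hδ]
    exact_mod_cast h'
  rw [Finset.sum_eq_single_of_mem j₀ (Finset.mem_range.2 hj₀m)]
  · have hxW : x ∈ Wnd ((j₀ : ℝ) * δ) δ b := by
      rw [mem_Wnd_iff]
      exact ⟨k₀, by simp only [hθ] at hf1 ⊢; linarith, by simp only [hθ] at hf2 ⊢; linarith⟩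
    rw [SOpFun, Set.indicator_of_mem hxW]
    simp
  · intro j hjm hne
    rw [SOpFun, Set.indicator_of_notMem]
    intro hxW
    obtain ⟨k, hk1, hk2⟩ := mem_Wnd_iff.1 hxW
    have hjm' : (j : ℝ) + 1 ≤ m := by exact_mod_cast Finset.mem_range.1 hjm
    have hx1 : 0 ≤ x - (k : ℝ) * b := by
      have : 0 ≤ (j : ℝ) * δ := by positivity
      linarith
    have hx2 : x - (k : ℝ) * b < |b| := by nlinarith
    have hkk₀ : k = k₀ := by
      by_contra hne'
      have h1 : (1 : ℝ) ≤ |((k - k₀ : ℤ) : ℝ)| := by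
        exact_mod_cast Int.one_le_abs (sub_ne_zero.2 hne')
      have h2 : |((k - k₀ : ℤ) : ℝ) * b| < |b| := by
        rw [abs_lt]
        push_cast
        constructor <;> nlinarith
      rw [abs_mul] at h2
      nlinarith [abs_nonneg b]
    rw [hkk₀] at hk1 hk2
    have hθj1 : (j : ℝ) * δ ≤ θ := by simp only [hθ]; linarith
    have hθj2 : θ < ((j : ℝ) + 1) * δ := by simp only [hθ]; nlinarith
    rcases Nat.lt_trichotomy j j₀ with hlt | heq | hgt
    · have h' : (j : ℝ) + 1 ≤ j₀ := by exact_mod_cast hlt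
      have := mul_le_mul_of_nonneg_right h' hδ.le
      linarith
    · exact hne heq
    · have h' : (j₀ : ℝ) + 1 ≤ j := by exact_mod_cast hgt
      have := mul_le_mul_of_nonneg_right h' hδ.le
      linarith

lemma core (n : ℕ) (p : ℤ × ℤ → Matrix (Fin n) (Fin n) ℂ)
    (hodd : ∀ β : ℤ × ℤ, Odd β.1 → Odd β.2 → p β = 0)
    (a b : ℝ) (ha : a ≠ 0) (hb : b ≠ 0) (mz : ℤ)
    (hab : b - a = 2 * Real.pi * mz)
    (Pa Pb : L2Rn n →L[ℂ] L2Rn n)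
    (hPa : IsPgamma n p a Pa) (hPb : IsPgamma n p b Pb) :
    spectrum ℂ Pb ⊆ spectrum ℂ Pa := by
  intro z hzb
  by_contra hza
  have hu : IsUnit ((algebraMap ℂ (L2Rn n →L[ℂ] L2Rn n)) z - Pa) :=
    spectrum.notMem_iff.1 hza
  obtain ⟨U, hU⟩ := hu
  set R : (L2Rn n →L[ℂ] L2Rn n) := ((U⁻¹ : (L2Rn n →L[ℂ] L2Rn n)ˣ) : (L2Rn n →L[ℂ] L2Rn n)) with hR
  have hR1 : ((algebraMap ℂ (L2Rn n →L[ℂ] L2Rn n)) z - Pa) * R = 1 := by rw [← hU, hR]; exact U.mul_inv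
  have hR2 : R * ((algebraMap ℂ (L2Rn n →L[ℂ] L2Rn n)) z - Pa) = 1 := by rw [← hU, hR]; exact U.inv_mul
  -- geometry of windows
  have hA : 0 < |a| := abs_pos.2 ha
  have hB : 0 < |b| := abs_pos.2 hb
  set m : ℕ := max 1 ⌈|b| / |a|⌉₊ with hm'
  have hm : 0 < m := lt_of_lt_of_le one_pos (le_max_left _ _)
  set δ : ℝ := |b| / m with hδ'
  have hmR : (0 : ℝ) < m := by exact_mod_cast hm
  have hδ : 0 < δ := by positivity
  have hmδ : (m : ℝ) * δ = |b| := by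
    have hm0 : (m : ℝ) ≠ 0 := hmR.ne'
    rw [hδ']
    field_simp
  have hδb : δ ≤ |b| := by
    rw [hδ']
    exact div_le_self hB.le (by exact_mod_cast hm)
  have hδa : δ ≤ |a| := by
    rw [hδ', div_le_iff₀ hmR]
    have h1 : |b| / |a| ≤ (⌈|b| / |a|⌉₊ : ℝ) := Nat.le_ceil _
    have h2 : (⌈|b| / |a|⌉₊ : ℝ) ≤ (m : ℝ) := by exact_mod_cast le_max_right 1 ⌈|b| / |a|⌉₊
    calc |b| = (|b| / |a|) * |a| := by field_simp
    _ ≤ (m : ℝ) * |a| := by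
        apply mul_le_mul_of_nonneg_right (h1.trans h2) hA.le
    _ = |a| * (m:ℝ) := by ring
  -- operators
  set J : ℕ → (L2Rn n →L[ℂ] L2Rn n) := fun j => SOp ((j : ℝ) * δ) δ a b hδ hδa hδb with hJdef
  set K : ℕ → (L2Rn n →L[ℂ] L2Rn n) := fun j => SOp ((j : ℝ) * δ) δ b a hδ hδb hδa with hKdef
  set Q : ℕ → (L2Rn n →L[ℂ] L2Rn n) := fun j => SOp ((j : ℝ) * δ) δ b b hδ hδb hδb with hQdef
  have hJ : ∀ j : ℕ, Pa * J j = J j * Pb := fun j => by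
    rw [ContinuousLinearMap.mul_def, ContinuousLinearMap.mul_def]
    exact intertwine n p hodd a b ((j : ℝ) * δ) δ hδ hδa hδb mz hab Pa Pb hPa hPb
  have hK : ∀ j : ℕ, Pb * K j = K j * Pa := fun j => by
    rw [ContinuousLinearMap.mul_def, ContinuousLinearMap.mul_def]
    exact intertwine n p hodd b a ((j : ℝ) * δ) δ hδ hδb hδa (-mz)
      (by push_cast; linarith) Pb Pa hPb hPa
  have hKJ : ∀ j : ℕ, K j * J j = Q j := fun j => by
    rw [ContinuousLinearMap.mul_def]
    exact SOp_comp ((j : ℝ) * δ) δ b a hδ hδb hδa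
  have hQ1 : ∑ j ∈ Finset.range m, Q j = 1 :=
    sum_SOp_one b hb m hm δ hδ hδb hmδ
  set R' : (L2Rn n →L[ℂ] L2Rn n) := ∑ j ∈ Finset.range m, K j * R * J j with hR'
  have e1 : ∀ j : ℕ, ((algebraMap ℂ (L2Rn n →L[ℂ] L2Rn n)) z - Pb) * K j = K j * ((algebraMap ℂ (L2Rn n →L[ℂ] L2Rn n)) z - Pa) := by
    intro j
    rw [sub_mul, mul_sub]
    rw [Algebra.commutes z (K j)]
    rw [hK j]
  have e2 : ∀ j : ℕ, J j * ((algebraMap ℂ (L2Rn n →L[ℂ] L2Rn n)) z - Pb) = ((algebraMap ℂ (L2Rn n →L[ℂ] L2Rn n)) z - Pa) * J j := by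
    intro j
    rw [mul_sub, sub_mul]
    rw [← Algebra.commutes z (J j)]
    rw [hJ j]
  have h1 : ((algebraMap ℂ (L2Rn n →L[ℂ] L2Rn n)) z - Pb) * R' = 1 := by
    rw [hR', Finset.mul_sum]
    have hterm : ∀ j ∈ Finset.range m,
        ((algebraMap ℂ (L2Rn n →L[ℂ] L2Rn n)) z - Pb) * (K j * R * J j) = Q j := by
      intro j _
      calc ((algebraMap ℂ (L2Rn n →L[ℂ] L2Rn n)) z - Pb) * (K j * R * J j)
          = (((algebraMap ℂ (L2Rn n →L[ℂ] L2Rn n)) z - Pb) * K j) * R * J j := by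
            rw [← mul_assoc, ← mul_assoc]
        _ = (K j * ((algebraMap ℂ (L2Rn n →L[ℂ] L2Rn n)) z - Pa)) * R * J j := by rw [e1 j]
        _ = K j * (((algebraMap ℂ (L2Rn n →L[ℂ] L2Rn n)) z - Pa) * R) * J j := by rw [mul_assoc (K j)]
        _ = K j * J j := by rw [hR1, mul_one]
        _ = Q j := hKJ j
    rw [Finset.sum_congr rfl hterm, hQ1]
  have h2 : R' * ((algebraMap ℂ (L2Rn n →L[ℂ] L2Rn n)) z - Pb) = 1 := by
    rw [hR', Finset.sum_mul]
    have hterm : ∀ j ∈ Finset.range m,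
        (K j * R * J j) * ((algebraMap ℂ (L2Rn n →L[ℂ] L2Rn n)) z - Pb) = Q j := by
      intro j _
      calc (K j * R * J j) * ((algebraMap ℂ (L2Rn n →L[ℂ] L2Rn n)) z - Pb)
          = K j * R * (J j * ((algebraMap ℂ (L2Rn n →L[ℂ] L2Rn n)) z - Pb)) := by rw [mul_assoc]
        _ = K j * R * (((algebraMap ℂ (L2Rn n →L[ℂ] L2Rn n)) z - Pa) * J j) := by rw [e2 j]
        _ = K j * (R * ((algebraMap ℂ (L2Rn n →L[ℂ] L2Rn n)) z - Pa)) * J j := by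
            rw [← mul_assoc, mul_assoc (K j)]
        _ = K j * J j := by rw [hR2, mul_one]
        _ = Q j := hKJ j
    rw [Finset.sum_congr rfl hterm, hQ1]
  exact (spectrum.mem_iff.1 hzb) ⟨⟨(algebraMap ℂ (L2Rn n →L[ℂ] L2Rn n)) z - Pb, R', h1, h2⟩, rfl⟩

end Aux

theorem stmt2 (n : ℕ) (hn : 1 ≤ n)
    (p : ℤ × ℤ → Matrix (Fin n) (Fin n) ℂ)
    (hdecay : ∀ N : ℕ, ∃ C : ℝ, 0 < C ∧ ∀ β : ℤ × ℤ,
      ‖p β‖ ≤ C / ((1 + |β.1| + |β.2| : ℤ) : ℝ) ^ N)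
    (hsym : ∀ β : ℤ × ℤ, p (-β) = (p β)ᴴ)
    (hodd : ∀ β : ℤ × ℤ, Odd β.1 → Odd β.2 → p β = 0)
    (γ : ℝ) (hγ : γ ≠ 0) (hγ' : γ + 2 * Real.pi ≠ 0)
    (P P' : L2Rn n →L[ℂ] L2Rn n)
    (hP : IsPgamma n p γ P) (hP' : IsPgamma n p (γ + 2 * Real.pi) P') :
    spectrum ℂ P' = spectrum ℂ P := by
  apply Set.Subset.antisymm
  · exact core n p hodd γ (γ + 2 * Real.pi) hγ hγ' 1
      (by push_cast; ring) P P' hP hP'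
  · exact core n p hodd (γ + 2 * Real.pi) γ hγ' hγ (-1)
      (by push_cast; ring) P' P hP' hP

end
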